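/- Let k be an algebraically closed field of prime characteristic p and let X be a p×p matrix over k. Then the k-subspace {Y ∈ M_p(k) : there exists c ∈ k with X*Y − Y*X = c•1} of M_p(k) has k-dimension p + 1 if and only if X has a single Jordan block of size p, i.e. there exists λ ∈ k such that (X − λ•1)^p = 0 and (X − λ•1)^(p−1) ≠ 0. -/

import Mathlib

/-- For a `p × p` matrix `X`, the subspace of matrices `Y` with `X*Y - Y*X` a scalar
multiple of the identity. -/
def scalarCommutatorSubspace (p : ℕ) (k : Type*) [Field k]
    (X : Matrix (Fin p) (Fin p) k) : Submodule k (Matrix (Fin p) (Fin p) k) where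
  carrier := {Y | ∃ c : k, X * Y - Y * X = c • (1 : Matrix (Fin p) (Fin p) k)}
  zero_mem' := ⟨0, by simp⟩
  add_mem' := by
    rintro Y Z ⟨c, hc⟩ ⟨d, hd⟩
    exact ⟨c + d, by rw [mul_add, add_mul, add_smul, ← hc, ← hd]; abel⟩
  smul_mem' := by
    rintro a Y ⟨c, hc⟩
    exact ⟨a * c, by rw [mul_smul_comm, smul_mul_assoc, ← smul_sub, hc, smul_smul]⟩

section Aux

open Polynomial Matrix Module LinearMap


open Polynomial Matrix

variable {p : ℕ} {k : Type*} [Field k]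

lemma comm_pow (X A : Matrix (Fin p) (Fin p) k) (h : X * A - A * X = 1) (m : ℕ) :
    X ^ (m + 1) * A - A * X ^ (m + 1) = ((m + 1 : ℕ) : k) • X ^ m := by
  induction m with
  | zero => simpa using h
  | succ m ih =>
    have e : X ^ (m + 1 + 1) = X * X ^ (m + 1) := (pow_succ' X (m + 1))
    have this1 : X ^ (m + 1 + 1) * A - A * X ^ (m + 1 + 1)
        = X * (X ^ (m + 1) * A - A * X ^ (m + 1)) + (X * A - A * X) * X ^ (m + 1) := by
      rw [e]; noncomm_ring
    rw [this1, ih, h, one_mul, mul_smul_comm, ← pow_succ']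
    push_cast
    conv_rhs => rw [add_smul, one_smul]

lemma deriv_comm (X A : Matrix (Fin p) (Fin p) k) (h : X * A - A * X = 1) (f : k[X]) :
    aeval X f * A - A * aeval X f = aeval X (derivative f) := by
  induction f using Polynomial.induction_on' with
  | add f g hf hg =>
    rw [map_add, map_add, map_add, add_mul, mul_add, ← hf, ← hg]; abel
  | monomial n a =>
    cases n with
    | zero =>
      simp [aeval_monomial, Algebra.algebraMap_eq_smul_one, smul_mul_assoc, mul_smul_comm]
    | succ n =>
      rw [derivative_monomial, aeval_monomial, aeval_monomial, Algebra.algebraMap_eq_smul_one,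
        Algebra.algebraMap_eq_smul_one]
      rw [smul_one_mul _ (X ^ (n+1)), smul_mul_assoc, mul_smul_comm, ← smul_sub,
        comm_pow X A h n]
      simp [smul_smul]

lemma jordan_of_comm (hp : p.Prime) [IsAlgClosed k] [CharP k p]
    (X A : Matrix (Fin p) (Fin p) k) (h : X * A - A * X = 1) :
    ∃ lam : k, (X - lam • (1 : Matrix (Fin p) (Fin p) k)) ^ p = 0 ∧
      (X - lam • (1 : Matrix (Fin p) (Fin p) k)) ^ (p - 1) ≠ 0 := by
  have hnontriv : Nontrivial (Matrix (Fin p) (Fin p) k) := by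
    have : Nonempty (Fin p) := ⟨⟨0, hp.pos⟩⟩
    infer_instance
  have hmonic : (minpoly k X).Monic := minpoly.monic X.isIntegral
  have hdeg_pos : 0 < (minpoly k X).natDegree := minpoly.natDegree_pos X.isIntegral
  have hderiv : derivative (minpoly k X) = 0 := by
    by_contra hne
    have h1 : aeval X (derivative (minpoly k X)) = 0 := by
      rw [← deriv_comm X A h (minpoly k X), minpoly.aeval, zero_mul, mul_zero, sub_zero]
    have h2 : minpoly k X ∣ derivative (minpoly k X) := minpoly.dvd k X h1
    have := Polynomial.natDegree_le_of_dvd h2 hne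
    have := Polynomial.natDegree_derivative_lt (p := minpoly k X) hdeg_pos.ne'
    omega
  have hdegle : (minpoly k X).natDegree ≤ p := by
    have h1 : minpoly k X ∣ X.charpoly := X.minpoly_dvd_charpoly
    have h2 := Polynomial.natDegree_le_of_dvd h1 X.charpoly_monic.ne_zero
    rwa [X.charpoly_natDegree_eq_dim, Fintype.card_fin] at h2
  have hexp : Polynomial.expand k p (Polynomial.contract p (minpoly k X)) = minpoly k X :=
    Polynomial.expand_contract p hderiv hp.ne_zero
  have hdegm : (minpoly k X).natDegree = p * (Polynomial.contract p (minpoly k X)).natDegree := by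
    conv_lhs => rw [← hexp]
    rw [Polynomial.natDegree_expand, mul_comm]
  have hcle : (Polynomial.contract p (minpoly k X)).natDegree ≤ 1 := by
    refine Nat.le_of_mul_le_mul_left ?_ hp.pos
    rw [← hdegm, mul_one]; exact hdegle
  have hg1 : (Polynomial.contract p (minpoly k X)).natDegree = 1 := by
    rcases Nat.lt_or_ge (Polynomial.contract p (minpoly k X)).natDegree 1 with h2 | h2
    · rw [Nat.lt_one_iff] at h2
      rw [h2, mul_zero] at hdegm
      omega
    · omega
  have hdegp : (minpoly k X).natDegree = p := by
    rw [hdegm, hg1, mul_one]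
  obtain ⟨a, b, hab⟩ := Polynomial.exists_eq_X_add_C_of_natDegree_le_one hcle
  have hmform' : minpoly k X = Polynomial.C a * Polynomial.X ^ p + Polynomial.C b := by
    conv_lhs => rw [← hexp]
    rw [hab, map_add, _root_.map_mul, Polynomial.expand_X, Polynomial.expand_C, Polynomial.expand_C]
  have ha1 : a = 1 := by
    have h1 : (minpoly k X).coeff p = 1 := by
      have := hmonic.leadingCoeff
      rwa [Polynomial.leadingCoeff, hdegp] at this
    rw [hmform', Polynomial.coeff_add, Polynomial.coeff_C_mul, Polynomial.coeff_X_pow,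
      if_pos rfl, mul_one, Polynomial.coeff_C, if_neg hp.ne_zero, add_zero] at h1
    exact h1
  have hmform : minpoly k X = Polynomial.X ^ p + Polynomial.C b := by
    rw [hmform', ha1, Polynomial.C_1, one_mul]
  obtain ⟨lam, hlam⟩ := IsAlgClosed.exists_pow_nat_eq (-b) hp.pos
  have hfact : Fact p.Prime := ⟨hp⟩
  have hmpow : minpoly k X = (Polynomial.X - Polynomial.C lam) ^ p := by
    rw [sub_pow_char, hmform, ← Polynomial.C_pow, hlam, map_neg, sub_neg_eq_add]
  have haeval : aeval X (Polynomial.X - Polynomial.C lam) = X - lam • 1 := by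
    rw [map_sub, aeval_X, aeval_C, Algebra.algebraMap_eq_smul_one]
  refine ⟨lam, ?_, ?_⟩
  · rw [← haeval, ← map_pow, ← hmpow, minpoly.aeval]
  · intro hzero
    have h1 : aeval X ((Polynomial.X - Polynomial.C lam) ^ (p - 1)) = 0 := by
      rw [map_pow, haeval, hzero]
    have h2 := minpoly.dvd k X h1
    have h3 : ((Polynomial.X - Polynomial.C lam) ^ (p - 1)) ≠ 0 :=
      ((Polynomial.monic_X_sub_C lam).pow _).ne_zero
    have h4 := Polynomial.natDegree_le_of_dvd h2 h3
    rw [Polynomial.natDegree_pow, Polynomial.natDegree_X_sub_C, mul_one, hdegp] at h4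
    omega


open Module LinearMap

universe u v

lemma alt_even_aux (K : Type u) [Field K] :
    ∀ (n : ℕ) (W : Type v) [AddCommGroup W] [Module K W] [FiniteDimensional K W],
      Module.finrank K W ≤ n → ∀ B : W →ₗ[K] W →ₗ[K] K, (∀ w, B w w = 0) →
      Even (Module.finrank K W + Module.finrank K (LinearMap.ker B)) := by
  intro n
  induction n with
  | zero =>
    intro W _ _ _ hle B halt
    have h0 : Module.finrank K W = 0 := Nat.le_zero.mp hle
    have h1 : Module.finrank K (LinearMap.ker B) ≤ 0 := h0 ▸ Submodule.finrank_le _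
    rw [h0, Nat.le_zero.mp h1]
    exact Even.zero
  | succ n ih =>
    intro W _ _ _ hle B halt
    have hskew : ∀ u w, B u w = -B w u := by
      intro u w
      have h0 := halt (u + w)
      simp only [map_add, LinearMap.add_apply, halt u, halt w] at h0
      linear_combination h0
    by_cases hB : B = 0
    · subst hB
      rw [LinearMap.ker_zero, finrank_top]
      exact ⟨Module.finrank K W, rfl⟩
    · -- find x, y with B x y ≠ 0
      obtain ⟨x, hx⟩ : ∃ x, B x ≠ 0 := by
        by_contra hc
        push_neg at hc
        exact hB (LinearMap.ext hc)
      obtain ⟨y, hxy⟩ : ∃ y, B x y ≠ 0 := by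
        by_contra hc
        push_neg at hc
        exact hx (LinearMap.ext hc)
      set L : W →ₗ[K] K × K := (B x).prod (B y) with hL
      set U : Submodule K W := LinearMap.ker L with hU
      have hmemU : ∀ w, w ∈ U ↔ B x w = 0 ∧ B y w = 0 := by
        intro w
        simp [hU, hL, LinearMap.mem_ker, Prod.ext_iff]
      have hyx : B y x ≠ 0 := by
        rw [hskew y x]
        simpa using hxy
      have hLsurj : LinearMap.range L = ⊤ := by
        rw [eq_top_iff]
        rintro ⟨s, t⟩ -
        refine ⟨(t / B y x) • x + (s / B x y) • y, ?_⟩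
        simp only [hL, LinearMap.prod_apply, Function.prod, map_add, _root_.map_smul, smul_eq_mul,
          halt x, halt y, Prod.smul_mk, Prod.mk_add_mk, Prod.mk.injEq, mul_zero, smul_zero]
        constructor
        · field_simp
          ring
        · field_simp
          ring
      have hrank : Module.finrank K U + 2 = Module.finrank K W := by
        have h1 := LinearMap.finrank_range_add_finrank_ker L
        rw [hLsurj, finrank_top, Module.finrank_prod, Module.finrank_self, ← hU] at h1
        omega
      -- restricted form
      set B' : U →ₗ[K] U →ₗ[K] K := B.compl₁₂ U.subtype U.subtype with hB'
      have halt' : ∀ u : U, B' u u = 0 := fun u => halt u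
      have hker' : LinearMap.ker B' = Submodule.comap U.subtype (LinearMap.ker B) := by
        ext u
        simp only [LinearMap.mem_ker, Submodule.mem_comap]
        constructor
        · intro hu
          ext w
          -- decompose w
          have hudef : ∀ w', w' ∈ U → B (↑u) w' = 0 := by
            intro w' hw'
            have h5 : B' u ⟨w', hw'⟩ = 0 := by rw [hu]; rfl
            rw [hB', LinearMap.compl₁₂_apply] at h5
            exact h5
          have hux : B (↑u) x = 0 := by
            rw [hskew]
            have := ((hmemU ↑u).mp u.2).1
            simp [this]
          have huy : B (↑u) y = 0 := by
            rw [hskew]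
            have := ((hmemU ↑u).mp u.2).2
            simp [this]
          have hw0 : w - (B y w / B y x) • x - (B x w / B x y) • y ∈ U := by
            rw [hmemU]
            constructor
            · simp only [map_sub, _root_.map_smul, smul_eq_mul, halt x]
              field_simp
              ring
            · simp only [map_sub, _root_.map_smul, smul_eq_mul, halt y]
              field_simp
              ring
          have := hudef _ hw0
          simp only [map_sub, _root_.map_smul, smul_eq_mul, hux, huy, mul_zero, sub_zero] at this
          simpa using this
        · intro hu
          ext w
          rw [hB', LinearMap.compl₁₂_apply]
          simp only [Submodule.subtype_apply] at hu ⊢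
          rw [hu]
          rfl
      have hkerB_le_U : LinearMap.ker B ≤ U := by
        intro w hw
        rw [LinearMap.mem_ker] at hw
        rw [hmemU]
        constructor
        · rw [hskew x w, hw]
          simp
        · rw [hskew y w, hw]
          simp
      have hfr : Module.finrank K (LinearMap.ker B') = Module.finrank K (LinearMap.ker B) := by
        rw [hker']
        have : Submodule.map U.subtype (Submodule.comap U.subtype (LinearMap.ker B))
            = LinearMap.ker B := by
          rw [Submodule.map_comap_eq, Submodule.range_subtype]
          exact inf_eq_right.mpr hkerB_le_U
        rw [← Submodule.finrank_map_subtype_eq U, this]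
      have hUle : Module.finrank K U ≤ n := by omega
      obtain ⟨r, hr⟩ := ih U hUle B' halt'
      exact ⟨r + 1, by omega⟩


open Matrix Module

variable {p : ℕ} {k : Type*} [Field k]

lemma trace_mul_std (W : Matrix (Fin p) (Fin p) k) (i j : Fin p) :
    (W * Matrix.single j i (1 : k)).trace = W i j := by
  simp [Matrix.trace, Matrix.diag, Matrix.mul_apply, Matrix.single, ite_and,
    Finset.sum_ite_eq, Finset.sum_ite_eq']

noncomputable def commForm (X : Matrix (Fin p) (Fin p) k) :
    Matrix (Fin p) (Fin p) k →ₗ[k] Matrix (Fin p) (Fin p) k →ₗ[k] k :=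
  LinearMap.mk₂ k (fun Y Z => ((X * Y - Y * X) * Z).trace)
    (fun Y Y' Z => by
      rw [mul_add, add_mul, ← trace_add]
      congr 1
      noncomm_ring)
    (fun a Y Z => by
      rw [mul_smul_comm, smul_mul_assoc, ← smul_sub, smul_mul_assoc, trace_smul, smul_eq_mul])
    (fun Y Z Z' => by rw [mul_add, trace_add])
    (fun a Y Z => by rw [mul_smul_comm, trace_smul, smul_eq_mul])

lemma commForm_alt (X Y : Matrix (Fin p) (Fin p) k) : commForm X Y Y = 0 := by
  show ((X * Y - Y * X) * Y).trace = 0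
  rw [sub_mul, trace_sub, mul_assoc Y X Y, trace_mul_comm Y (X * Y), sub_self]

lemma commForm_ker (X Y : Matrix (Fin p) (Fin p) k) :
    Y ∈ LinearMap.ker (commForm X) ↔ X * Y - Y * X = 0 := by
  constructor
  · intro hY
    ext i j
    have h1 : commForm X Y (Matrix.single j i (1 : k)) = 0 := by
      rw [LinearMap.mem_ker.mp hY]; rfl
    have h2 : ((X * Y - Y * X) * Matrix.single j i (1 : k)).trace = 0 := h1
    rw [trace_mul_std] at h2
    simpa using h2
  · intro hY
    ext Z
    show ((X * Y - Y * X) * Z).trace = 0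
    rw [hY, zero_mul, trace_zero]

variable {p : ℕ} {k : Type*} [Field k]

lemma mem_scs (X Y : Matrix (Fin p) (Fin p) k) :
    Y ∈ scalarCommutatorSubspace p k X ↔
      ∃ c : k, X * Y - Y * X = c • (1 : Matrix (Fin p) (Fin p) k) := Iff.rfl

set_option maxHeartbeats 1600000 in
lemma finrank_scs_of_nilpotent (hp : p.Prime) [CharP k p]
    (N : Matrix (Fin p) (Fin p) k) (h1 : N ^ p = 0) (h2 : N ^ (p - 1) ≠ 0) :
    Module.finrank k (scalarCommutatorSubspace p k N) = p + 1 := by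
  have hp2 : 2 ≤ p := hp.two_le
  -- a vector not killed by N^(p-1)
  obtain ⟨v, hv⟩ : ∃ v : Fin p → k, N ^ (p - 1) *ᵥ v ≠ 0 := by
    by_contra hc
    push_neg at hc
    apply h2
    ext i j
    have := congrFun (hc (Pi.single j 1)) i
    simpa [Matrix.mulVec_single] using this
  set b : ℕ → (Fin p → k) := fun n => N ^ n *ᵥ v with hbdef
  have hb0 : b 0 = v := by simp [hbdef, Matrix.one_mulVec]
  have hbsucc : ∀ n, N *ᵥ b n = b (n + 1) := by
    intro n
    rw [hbdef]
    dsimp only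
    rw [Matrix.mulVec_mulVec, ← pow_succ']
  have hNz : ∀ m, p ≤ m → N ^ m = 0 := by
    intro m hm
    calc N ^ m = N ^ (m - p) * N ^ p := by rw [← pow_add]; congr 1; omega
    _ = 0 := by rw [h1, mul_zero]
  have hbp : ∀ m, p ≤ m → b m = 0 := by
    intro m hm
    rw [hbdef]
    dsimp only
    rw [hNz m hm, Matrix.zero_mulVec]
  -- linear independence
  have li : LinearIndependent k (fun i : Fin p => b ↑i) := by
    rw [Fintype.linearIndependent_iff]
    intro g hg
    suffices H : ∀ m : ℕ, ∀ hm : m < p, g ⟨m, hm⟩ = 0 by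
      intro i
      have := H ↑i i.isLt
      simpa using this
    intro m
    induction m using Nat.strong_induction_on with
    | _ m IH =>
      intro hm
      -- apply N^(p-1-m) to the relation
      have happ := congrArg (fun w => N ^ (p - 1 - m) *ᵥ w) hg
      rw [Matrix.mulVec_zero] at happ
      have hsum : ∀ i : Fin p,
          N ^ (p - 1 - m) *ᵥ b ↑i = N ^ (p - 1 - m + ↑i) *ᵥ v := by
        intro i
        rw [hbdef]
        dsimp only
        rw [Matrix.mulVec_mulVec, ← pow_add]
      rw [← Matrix.mulVecLin_apply, map_sum] at happ
      simp only [_root_.map_smul, Matrix.mulVecLin_apply, hsum] at happ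
      have hsingle : ∀ i : Fin p, i ∈ Finset.univ → i ≠ ⟨m, hm⟩ →
          g i • (N ^ (p - 1 - m + ↑i) *ᵥ v) = 0 := by
        intro i _ hne
        rcases lt_or_gt_of_ne (fun h => hne (Fin.ext h) : (i : ℕ) ≠ m) with hlt | hgt
        · rw [IH ↑i hlt i.isLt]
          · exact zero_smul _ _
        · have : p ≤ p - 1 - m + ↑i := by
            have := i.isLt
            omega
          rw [hNz _ this, Matrix.zero_mulVec, smul_zero]
      rw [Finset.sum_eq_single_of_mem ⟨m, hm⟩ (Finset.mem_univ _) hsingle] at happ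
      have hexp : p - 1 - m + m = p - 1 := by omega
      rw [hexp] at happ
      exact (smul_eq_zero.mp happ).resolve_right hv
  have hne : Nonempty (Fin p) := ⟨⟨0, hp.pos⟩⟩
  have hcard : Fintype.card (Fin p) = Module.finrank k (Fin p → k) := by
    rw [Fintype.card_fin, Module.finrank_fin_fun]
  let bas : Basis (Fin p) k (Fin p → k) := basisOfLinearIndependentOfCardEqFinrank li hcard
  have hbas : ∀ i : Fin p, bas i = b ↑i := by
    intro i
    rw [show bas i = _ from congrFun (coe_basisOfLinearIndependentOfCardEqFinrank li hcard) i]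
  -- the matrix A
  set f : Fin p → (Fin p → k) := fun i => (-((i : ℕ) : k)) • b ((i : ℕ) - 1) with hfdef
  set A₀ : (Fin p → k) →ₗ[k] (Fin p → k) := bas.constr k f with hA₀def
  have hA₀ : ∀ i : Fin p, A₀ (b ↑i) = f i := by
    intro i
    rw [← hbas i, hA₀def]
    exact bas.constr_basis k f i
  set A : Matrix (Fin p) (Fin p) k := LinearMap.toMatrix' A₀ with hAdef
  have hAapp : ∀ w, A *ᵥ w = A₀ w := by
    intro w
    rw [← Matrix.toLin'_apply, hAdef, Matrix.toLin'_toMatrix']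
  have hNA : N * A - A * N = 1 := by
    apply Matrix.toLin'.injective
    rw [map_sub, Matrix.toLin'_mul, Matrix.toLin'_mul, Matrix.toLin'_one]
    apply bas.ext
    intro i
    simp only [LinearMap.sub_apply, LinearMap.comp_apply, LinearMap.id_apply,
      Matrix.toLin'_apply]
    rw [hbas i, hAapp, hAapp, hA₀ i, hbsucc]
    rcases Nat.eq_zero_or_pos ↑i with h0 | hpos
    · -- i = 0
      rw [hfdef]
      dsimp only
      rw [h0]
      have h1p : (1 : ℕ) < p := hp2
      have : A₀ (b (0 + 1)) = f ⟨1, h1p⟩ := by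
        have h := hA₀ ⟨1, h1p⟩
        simpa using h
      rw [this, hfdef]
      dsimp only
      simp [h0]
    · rcases Nat.lt_or_ge (↑i + 1) p with hlt | hge
      · -- middle case
        have : A₀ (b (↑i + 1)) = f ⟨↑i + 1, hlt⟩ := by
          have h := hA₀ ⟨↑i + 1, hlt⟩
          simpa using h
        rw [this, hfdef]
        dsimp only
        rw [Matrix.mulVec_smul, hbsucc]
        have he1 : (i : ℕ) - 1 + 1 = ↑i := by omega
        have he2 : ((⟨↑i + 1, hlt⟩ : Fin p) : ℕ) - 1 = ↑i := by simp
        rw [he1, he2]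
        rw [← sub_smul]
        have : (-((i : ℕ) : k)) - (-(((↑i + 1 : ℕ) : k))) = 1 := by
          push_cast
          ring
        rw [show ((((⟨↑i + 1, hlt⟩ : Fin p) : ℕ)) : k) = (((↑i + 1 : ℕ)) : k) from rfl, this,
          one_smul]
      · -- top case
        have hieq : (i : ℕ) = p - 1 := by have := i.isLt; omega
        have hb1 : b (↑i + 1) = 0 := hbp _ (by omega)
        rw [hb1, map_zero, hfdef]
        dsimp only
        rw [Matrix.mulVec_smul, hbsucc]
        have he1 : (i : ℕ) - 1 + 1 = ↑i := by omega
        rw [he1]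
        have hcast : (((i : ℕ) : k)) = -1 := by
          rw [hieq]
          have : ((p - 1 : ℕ) : k) = (p : k) - 1 := by
            rw [Nat.cast_sub (by omega)]
            simp
          rw [this, CharP.cast_eq_zero k p, zero_sub]
        rw [hcast, neg_neg, one_smul, sub_zero]
  -- now build the linear equivalence
  have hAv : A *ᵥ v = 0 := by
    calc A *ᵥ v = A₀ (b 0) := by rw [hAapp, hb0]
    _ = 0 := by
      have h := hA₀ ⟨0, hp.pos⟩
      simpa [hfdef] using h
  set T : Matrix (Fin p) (Fin p) k →ₗ[k] k × (Fin p → k) :=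
    { toFun := fun Y => ((N * Y - Y * N) ⟨0, hp.pos⟩ ⟨0, hp.pos⟩, Y *ᵥ v)
      map_add' := by
        intro Y Z
        have hc : N * (Y + Z) - (Y + Z) * N = (N * Y - Y * N) + (N * Z - Z * N) := by
          noncomm_ring
        simp only [hc, Matrix.add_mulVec, Matrix.add_apply, Prod.mk_add_mk, Prod.mk.injEq]
      map_smul' := by
        intro a Y
        have hc : N * (a • Y) - (a • Y) * N = a • (N * Y - Y * N) := by
          rw [mul_smul_comm, smul_mul_assoc, smul_sub]
        simp only [hc, Matrix.smul_mulVec, Matrix.smul_apply, RingHom.id_apply,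
          Prod.smul_mk, smul_eq_mul] } with hTdef
  set Φ : scalarCommutatorSubspace p k N →ₗ[k] k × (Fin p → k) :=
    T.domRestrict (scalarCommutatorSubspace p k N) with hPhidef
  have hinj : Function.Injective Φ := by
    rw [injective_iff_map_eq_zero]
    intro Y hY0
    obtain ⟨c, hc⟩ := (mem_scs N ↑Y).mp Y.2
    rw [hPhidef, LinearMap.domRestrict_apply, hTdef, Prod.ext_iff] at hY0
    obtain ⟨hY1, hY2⟩ := hY0
    simp only [LinearMap.coe_mk, AddHom.coe_mk, Prod.fst_zero, Prod.snd_zero] at hY1 hY2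
    have hc0 : c = 0 := by
      have := congrFun (congrFun hc ⟨0, hp.pos⟩) ⟨0, hp.pos⟩
      rw [hY1] at this  -- ?
      rw [Matrix.smul_apply, Matrix.one_apply_eq, smul_eq_mul, mul_one] at this
      exact this.symm
    rw [hc0, zero_smul] at hc
    have hcomm : N * (Y : Matrix (Fin p) (Fin p) k)
        = (Y : Matrix (Fin p) (Fin p) k) * N := sub_eq_zero.mp hc
    have hYzero : (↑Y : Matrix (Fin p) (Fin p) k) = 0 := by
      apply Matrix.toLin'.injective
      rw [map_zero]
      apply bas.ext
      intro i
      rw [hbas i, Matrix.toLin'_apply, LinearMap.zero_apply, hbdef]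
      dsimp only
      have hcY : Commute (↑Y : Matrix (Fin p) (Fin p) k) N :=
        ((Commute.eq hcomm : Commute N ↑Y)).symm
      rw [Matrix.mulVec_mulVec, (hcY.pow_right (↑i : ℕ)).eq, ← Matrix.mulVec_mulVec, hY2,
        Matrix.mulVec_zero]
    exact Subtype.ext hYzero
  have hsurj : Function.Surjective Φ := by
    rintro ⟨c, w⟩
    set d := bas.repr w with hddef
    set Mw : Matrix (Fin p) (Fin p) k := ∑ i : Fin p, d i • N ^ (i : ℕ) with hMwdef
    have hMwN : N * Mw = Mw * N := by
      rw [hMwdef, Finset.mul_sum, Finset.sum_mul]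
      refine Finset.sum_congr rfl fun i _ => ?_
      rw [mul_smul_comm, smul_mul_assoc, ← pow_succ', ← pow_succ]
    have hMwv : Mw *ᵥ v = w := by
      have hstep : Mw *ᵥ v = ∑ i : Fin p, d i • (N ^ (i : ℕ) *ᵥ v) := by
        rw [← Matrix.toLin'_apply, hMwdef, map_sum, LinearMap.sum_apply]
        simp only [_root_.map_smul, LinearMap.smul_apply, Matrix.toLin'_apply]
      rw [hstep]
      conv_rhs => rw [← bas.sum_repr w]
      refine Finset.sum_congr rfl fun i _ => ?_
      rw [hbas i, hbdef, ← hddef]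
    set Y : Matrix (Fin p) (Fin p) k := c • A + Mw with hYdef
    have hYc : N * Y - Y * N = c • (1 : Matrix (Fin p) (Fin p) k) := by
      have hexp : N * Y - Y * N = c • (N * A - A * N) + (N * Mw - Mw * N) := by
        rw [hYdef, mul_add, add_mul, mul_smul_comm, smul_mul_assoc, smul_sub]
        abel
      rw [hexp, hNA, hMwN, sub_self, add_zero]
    have hYmem : Y ∈ scalarCommutatorSubspace p k N := ⟨c, hYc⟩
    refine ⟨⟨Y, hYmem⟩, ?_⟩
    rw [hPhidef, LinearMap.domRestrict_apply, hTdef]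
    dsimp only [LinearMap.coe_mk, AddHom.coe_mk]
    refine Prod.ext ?_ ?_
    · dsimp only
      rw [hYc, Matrix.smul_apply, Matrix.one_apply_eq, smul_eq_mul, mul_one]
    · dsimp only
      rw [hYdef, Matrix.add_mulVec, Matrix.smul_mulVec, hAv, smul_zero, zero_add, hMwv]
  have equiv : (scalarCommutatorSubspace p k N) ≃ₗ[k] k × (Fin p → k) :=
    LinearEquiv.ofBijective Φ ⟨hinj, hsurj⟩
  rw [equiv.finrank_eq, Module.finrank_prod, Module.finrank_self, Module.finrank_fin_fun]
  omega

end Aux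

/-- Over an algebraically closed field of characteristic `p > 0`, the space
`{Y : ∃ c, X*Y - Y*X = c•1}` has dimension `p + 1` if and only if `X` has a single Jordan
block of size `p`. -/
theorem finrank_scalarCommutatorSubspace_eq_iff_single_jordan_block
    (p : ℕ) (hp : p.Prime) (k : Type*) [Field k] [IsAlgClosed k] [CharP k p]
    (X : Matrix (Fin p) (Fin p) k) :
    Module.finrank k (scalarCommutatorSubspace p k X) = p + 1 ↔
      ∃ lam : k, (X - lam • (1 : Matrix (Fin p) (Fin p) k)) ^ p = 0 ∧
        (X - lam • (1 : Matrix (Fin p) (Fin p) k)) ^ (p - 1) ≠ 0 := by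
  constructor
  · intro hdim
    by_cases hA : ∃ A, X * A - A * X = 1
    · obtain ⟨A, hA⟩ := hA
      exact jordan_of_comm hp X A hA
    · exfalso
      push_neg at hA
      have hVeq : scalarCommutatorSubspace p k X = LinearMap.ker (commForm X) := by
        ext Y
        rw [mem_scs, commForm_ker]
        constructor
        · rintro ⟨c, hc⟩
          by_cases hc0 : c = 0
          · rw [hc, hc0, zero_smul]
          · exact absurd (show X * (c⁻¹ • Y) - (c⁻¹ • Y) * X = 1 by
              rw [mul_smul_comm, smul_mul_assoc, ← smul_sub, hc, smul_smul,
                inv_mul_cancel₀ hc0, one_smul]) (hA _)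
        · intro h
          exact ⟨0, by rw [h, zero_smul]⟩
      have heven := alt_even_aux k (Module.finrank k (Matrix (Fin p) (Fin p) k))
        (Matrix (Fin p) (Fin p) k) le_rfl (commForm X) (commForm_alt X)
      rw [← hVeq, hdim, Module.finrank_matrix, Fintype.card_fin, Module.finrank_self, mul_one] at heven
      obtain ⟨r, hr⟩ := heven
      obtain ⟨s, hs⟩ := Nat.even_mul_succ_self p
      have hkey : p * p + (p + 1) = s + s + 1 := by
        rw [show p * p + (p + 1) = p * (p + 1) + 1 by ring, hs]
      have : r + r = s + s + 1 := by rw [← hr, hkey]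
      omega
  · rintro ⟨lam, h1, h2⟩
    have hshift : scalarCommutatorSubspace p k X
        = scalarCommutatorSubspace p k (X - lam • 1) := by
      ext Y
      rw [mem_scs, mem_scs]
      have hcomm : (X - lam • 1) * Y - Y * (X - lam • 1) = X * Y - Y * X := by
        rw [sub_mul, mul_sub, smul_mul_assoc, mul_smul_comm, one_mul, mul_one]
        abel
      rw [hcomm]
    rw [hshift]
    exact finrank_scs_of_nilpotent hp (X - lam • 1) h1 h2
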